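/- In the clade graph G_{T₁,T₂} of two rooted trees T₁, T₂ on leaf set [n], every clade C of T₁ is adjacent to the smallest clade of T₂ containing C, and moreover the set of T₂-clades adjacent to C has a unique maximal element which is this smallest containing clade. -/
import Mathlib


/-- A rooted tree on leaf set `[n]`, identified with its family of clades. -/
def IsCladeFamily {n : ℕ} (F : Finset (Finset (Fin n))) : Prop :=
  Finset.univ ∈ F ∧ (∀ i : Fin n, {i} ∈ F) ∧
  ∀ A ∈ F, ∀ B ∈ F, A ⊆ B ∨ B ⊆ A ∨ Disjoint A B

/-- The most recent common ancestor (smallest clade containing both `u` and `v`). -/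
def mca {n : ℕ} (F : Finset (Finset (Fin n))) (u v : Fin n) : Finset (Fin n) :=
  (F.filter (fun A => u ∈ A ∧ v ∈ A)).inf id

lemma mca_subset {n : ℕ} (F : Finset (Finset (Fin n))) (u v : Fin n)
    {A : Finset (Fin n)} (hA : A ∈ F) (hu : u ∈ A) (hv : v ∈ A) :
    mca F u v ⊆ A := by
  have h : (F.filter (fun A => u ∈ A ∧ v ∈ A)).inf id ≤ id A :=
    Finset.inf_le (Finset.mem_filter.mpr ⟨hA, hu, hv⟩)
  exact h

lemma clade_comp {n : ℕ} {F : Finset (Finset (Fin n))} (hF : IsCladeFamily F)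
    {A B : Finset (Fin n)} (hA : A ∈ F) (hB : B ∈ F) {u : Fin n}
    (hu : u ∈ A) (hu' : u ∈ B) : A ⊆ B ∨ B ⊆ A := by
  rcases hF.2.2 A hA B hB with h | h | h
  · exact Or.inl h
  · exact Or.inr h
  · exact absurd hu' (Finset.disjoint_left.mp h hu)

lemma mca_spec {n : ℕ} {F : Finset (Finset (Fin n))} (hF : IsCladeFamily F)
    (u v : Fin n) : mca F u v ∈ F ∧ u ∈ mca F u v ∧ v ∈ mca F u v := by
  classical
  set s := F.filter (fun A => u ∈ A ∧ v ∈ A) with hs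
  have hne : s.Nonempty := ⟨Finset.univ, Finset.mem_filter.mpr
    ⟨hF.1, Finset.mem_univ u, Finset.mem_univ v⟩⟩
  obtain ⟨m, hm, hmin⟩ := Finset.exists_min_image s (fun A => A.card) hne
  obtain ⟨hmF, hmu, hmv⟩ := Finset.mem_filter.mp hm
  have hle : ∀ A ∈ s, m ⊆ A := by
    intro A hA
    obtain ⟨hAF, hAu, hAv⟩ := Finset.mem_filter.mp hA
    rcases clade_comp hF hmF hAF hmu hAu with h | h
    · exact h
    · exact le_of_eq (Finset.eq_of_subset_of_card_le h (hmin A hA)).symm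
  have : mca F u v = m := by
    apply le_antisymm (Finset.inf_le hm)
    exact Finset.le_inf hle
  rw [this]
  exact ⟨hmF, hmu, hmv⟩

lemma exists_mca_pair {n : ℕ} {F : Finset (Finset (Fin n))} (hF : IsCladeFamily F)
    {C : Finset (Fin n)} (hC : C ∈ F) (hCne : C.Nonempty) :
    ∃ i ∈ C, ∃ j ∈ C, mca F i j = C := by
  obtain ⟨i, hi⟩ := hCne.exists_mem
  obtain ⟨j, hj, hmax⟩ := Finset.exists_max_image C (fun k => (mca F i k).card) hCne
  refine ⟨i, hi, j, hj, ?_⟩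
  apply Finset.Subset.antisymm (mca_subset F i j hC hi hj)
  intro k hk
  have hk' := mca_spec hF i k
  have hj' := mca_spec hF i j
  rcases clade_comp hF hk'.1 hj'.1 hk'.2.1 hj'.2.1 with h | h
  · exact h hk'.2.2
  · exact (Finset.eq_of_subset_of_card_le h (hmax k hk)) ▸ hk'.2.2

/-- In the clade graph `G_{T₁,T₂}`, every (non-singleton) clade `C` of `T₁` is adjacent
to the smallest clade `D` of `T₂` containing `C` (i.e. some edge `e_{ij}` joins them),
and `D` is the unique maximal element of the set of `T₂`-clades adjacent to `C`. -/
theorem cladeGraph_adjacent_to_smallest {n : ℕ} (F₁ F₂ : Finset (Finset (Fin n)))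
    (h₁ : IsCladeFamily F₁) (h₂ : IsCladeFamily F₂)
    (C : Finset (Fin n)) (hC : C ∈ F₁) (hC2 : 2 ≤ C.card)
    (D : Finset (Fin n)) (hD : D ∈ F₂) (hCD : C ⊆ D)
    (hDmin : ∀ D' ∈ F₂, C ⊆ D' → D ⊆ D') :
    (∃ i j : Fin n, i ≠ j ∧ C = mca F₁ i j ∧ D = mca F₂ i j) ∧
    (∀ B ∈ F₂, (∃ i j : Fin n, i ≠ j ∧ C = mca F₁ i j ∧ B = mca F₂ i j) → B ⊆ D) := by
  classical
  constructor
  · obtain ⟨i, hi, j, hj, hij⟩ := exists_mca_pair h₁ hC (Finset.card_pos.mp (by omega))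
    set S := (C ×ˢ C).filter (fun p => mca F₁ p.1 p.2 = C) with hS
    have hne : S.Nonempty :=
      ⟨(i, j), Finset.mem_filter.mpr ⟨Finset.mem_product.mpr ⟨hi, hj⟩, hij⟩⟩
    obtain ⟨p, hpS, hpmax⟩ := Finset.exists_max_image S (fun p => (mca F₂ p.1 p.2).card) hne
    obtain ⟨hpC, hpeq⟩ := Finset.mem_filter.mp hpS
    obtain ⟨ha, hb⟩ := Finset.mem_product.mp hpC
    set a := p.1 with ha'
    set b := p.2 with hb'
    have hM2 := mca_spec h₂ a b
    have hMD : mca F₂ a b ⊆ D := mca_subset F₂ a b hD (hCD ha) (hCD hb)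
    have hMeq : mca F₂ a b = D := by
      by_contra hne'
      have hnc : ¬ C ⊆ mca F₂ a b := fun h =>
        hne' (Finset.Subset.antisymm hMD (hDmin _ hM2.1 h))
      obtain ⟨k, hkC, hkM⟩ := Finset.not_subset.mp hnc
      have key : ∀ x, x ∈ C → x ∈ mca F₂ a b → mca F₁ x k = C → False := by
        intro x hxC hxM hxk
        have hx2 := mca_spec h₂ x k
        have hsub : mca F₂ a b ⊆ mca F₂ x k := by
          rcases clade_comp h₂ hx2.1 hM2.1 hx2.2.1 hxM with h | h
          · exact absurd (h hx2.2.2) hkM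
          · exact h
        have hcard : (mca F₂ x k).card ≤ (mca F₂ a b).card :=
          hpmax (x, k) (Finset.mem_filter.mpr ⟨Finset.mem_product.mpr ⟨hxC, hkC⟩, hxk⟩)
        exact hkM ((Finset.eq_of_subset_of_card_le hsub hcard) ▸ hx2.2.2)
      have hA := mca_spec h₁ a k
      have hB := mca_spec h₁ b k
      have hAC : mca F₁ a k ⊆ C := mca_subset F₁ a k hC ha hkC
      have hBC : mca F₁ b k ⊆ C := mca_subset F₁ b k hC hb hkC
      rcases clade_comp h₁ hA.1 hB.1 hA.2.2 hB.2.2 with h | h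
      · have hCsub : C ⊆ mca F₁ b k := by
          rw [← hpeq]
          exact mca_subset F₁ a b hB.1 (h hA.2.1) hB.2.1
        exact key b hb hM2.2.2 (Finset.Subset.antisymm hBC hCsub)
      · have hCsub : C ⊆ mca F₁ a k := by
          rw [← hpeq]
          exact mca_subset F₁ a b hA.1 hA.2.1 (h hB.2.1)
        exact key a ha hM2.2.1 (Finset.Subset.antisymm hAC hCsub)
    have hab : a ≠ b := by
      intro hEq
      have hsub : mca F₁ a b ⊆ {a} := by
        rw [← hEq]
        exact mca_subset F₁ a a (h₁.2.1 a) (Finset.mem_singleton_self a)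
          (Finset.mem_singleton_self a)
      rw [hpeq] at hsub
      have := Finset.card_le_card hsub
      simp at this
      omega
    exact ⟨a, b, hab, hpeq.symm, hMeq.symm⟩
  · rintro B hB ⟨i, j, hij, hCij, hBij⟩
    have hi := mca_spec h₁ i j
    have hiC : i ∈ C := hCij ▸ hi.2.1
    have hjC : j ∈ C := hCij ▸ hi.2.2
    rw [hBij]
    exact mca_subset F₂ i j hD (hCD hiC) (hCD hjC)
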